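/- Let P and Q be probability measures on a common measurable space with P absolutely continuous with respect to Q, and let h be a nonnegative measurable function proportional to the density dP/dQ, i.e. dP/dQ = h / ∫ h dQ with 0 < ∫ h dQ < ∞. If ∫ |h(x) − 1| dQ(x) ≤ δ for some δ ∈ (0,1), then TV(P, Q) ≤ δ/(1 − δ). -/

import Mathlib

open MeasureTheory

/-- Total variation distance between two measures: the supremum over measurable
sets `D` of `|P D - Q D|`. -/
noncomputable def tvDist {Ω : Type*} [MeasurableSpace Ω] (P Q : Measure Ω) : ℝ :=
  ⨆ D : {s : Set Ω // MeasurableSet s}, |(P D).toReal - (Q D).toReal|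

/-- If `P ≪ Q` with density proportional to `h`, i.e. `P(s) = ∫_s h dQ / ∫ h dQ`, and
`∫ |h - 1| dQ ≤ δ` for some `δ ∈ (0,1)`, then `TV(P,Q) ≤ δ / (1 - δ)`. -/
theorem tv_le_of_density_close {Ω : Type*} [MeasurableSpace Ω] (P Q : Measure Ω)
    [IsProbabilityMeasure P] [IsProbabilityMeasure Q] (hPQ : P ≪ Q)
    (h : Ω → ℝ) (hmeas : Measurable h) (hnonneg : ∀ x, 0 ≤ h x)
    (hint : Integrable h Q) (hpos : 0 < ∫ x, h x ∂Q)
    (hdens : ∀ s : Set Ω, MeasurableSet s →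
      (P s).toReal = (∫ x in s, h x ∂Q) / ∫ x, h x ∂Q)
    (δ : ℝ) (hδ0 : 0 < δ) (hδ1 : δ < 1)
    (hclose : ∫ x, |h x - 1| ∂Q ≤ δ) :
    tvDist P Q ≤ δ / (1 - δ) := by
  set Z := ∫ x, h x ∂Q with hZdef
  have key : ∀ (μ : Measure Ω) (f : Ω → ℝ), |∫ x, f x ∂μ| ≤ ∫ x, |f x| ∂μ := fun μ f => by
    simpa [Real.norm_eq_abs] using norm_integral_le_integral_norm (μ := μ) f
  have hint1 : Integrable (fun _ : Ω => (1 : ℝ)) Q := integrable_const 1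
  have habsint : Integrable (fun x => |h x - 1|) Q := (hint.sub hint1).abs
  have hZ1 : |Z - 1| ≤ δ := by
    have h1 : ∫ x, (h x - 1) ∂Q = Z - 1 := by
      rw [integral_sub hint hint1]
      simp
      exact hZdef.symm
    calc |Z - 1| = |∫ x, (h x - 1) ∂Q| := by rw [h1]
      _ ≤ ∫ x, |h x - 1| ∂Q := key Q _
      _ ≤ δ := hclose
  have hZlb : 1 - δ ≤ Z := by
    have := abs_le.mp hZ1
    linarith [this.1]
  have hintZ : Integrable (fun x => h x - Z) Q := hint.sub (integrable_const Z)
  refine ciSup_le ?_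
  rintro ⟨D, hD⟩
  have hIdef : ∫ x in D, (h x - Z) ∂Q = (∫ x in D, h x ∂Q) - (Q D).toReal * Z := by
    rw [integral_sub hint.restrict (integrable_const Z), setIntegral_const, smul_eq_mul]
    rfl
  set I := ∫ x in D, (h x - Z) ∂Q with hIdef'
  have htot : ∫ x, (h x - Z) ∂Q = 0 := by
    rw [integral_sub hint (integrable_const Z)]
    simp
    exact sub_eq_zero.mpr hZdef.symm
  have hcompl : I + ∫ x in Dᶜ, (h x - Z) ∂Q = 0 := by
    rw [hIdef', integral_add_compl hD hintZ, htot]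
  have hb1 : |I| ≤ ∫ x in D, |h x - Z| ∂Q := key _ _
  have hb2 : |I| ≤ ∫ x in Dᶜ, |h x - Z| ∂Q := by
    have : I = -(∫ x in Dᶜ, (h x - Z) ∂Q) := by linarith
    rw [this, abs_neg]
    exact key _ _
  have hsum : (∫ x in D, |h x - Z| ∂Q) + ∫ x in Dᶜ, |h x - Z| ∂Q = ∫ x, |h x - Z| ∂Q :=
    integral_add_compl hD hintZ.abs
  have htotabs : ∫ x, |h x - Z| ∂Q ≤ 2 * δ := by
    have hmono : ∫ x, |h x - Z| ∂Q ≤ ∫ x, (|h x - 1| + |Z - 1|) ∂Q := by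
      refine integral_mono hintZ.abs (habsint.add (integrable_const _)) fun x => ?_
      calc |h x - Z| = |(h x - 1) + (1 - Z)| := by congr 1; ring
        _ ≤ |h x - 1| + |1 - Z| := abs_add_le _ _
        _ = |h x - 1| + |Z - 1| := by rw [abs_sub_comm (1:ℝ) Z]
    have heq : ∫ x, (|h x - 1| + |Z - 1|) ∂Q = (∫ x, |h x - 1| ∂Q) + |Z - 1| := by
      rw [integral_add habsint (integrable_const _)]
      simp
    linarith
  have hIle : |I| ≤ δ := by linarith
  have hPD : (P D).toReal - (Q D).toReal = I / Z := by
    rw [hdens D hD, hIdef]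
    field_simp
  rw [hPD, abs_div, abs_of_pos hpos]
  exact div_le_div₀ hδ0.le hIle (by linarith) hZlb
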